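/- Let H ∈ F₂^{m×n} have rank m over F₂, and let β > 0, ω > 0. With p_G(x) = e^{−β|Hx|}/Z, Z = Σ_{x} e^{−β|Hx|}, and mean energy ⟨E⟩_β = Σ_x p_G(x)·|Hx|, the Gibbs weight of the microcanonical shell Ξ_ω(β) satisfies p_G(Ξ_ω(β)) ≥ 1 − 2·exp(−ω²n²/(2m)); equivalently, Σ over all x with | |Hx| − ⟨E⟩_β | > ωn of p_G(x) is at most 2·exp(−ω²n²/(2m)). -/

import Mathlib

open Finset Real

lemma sum_prod_pi {m : ℕ} (h : Fin m → ZMod 2 → ℝ) :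
    ∑ y : Fin m → ZMod 2, ∏ i, h i (y i) = ∏ i, ∑ b : ZMod 2, h i b := by
  rw [Finset.prod_univ_sum, Fintype.piFinset_univ]

lemma hammingNorm_cast {m : ℕ} (y : Fin m → ZMod 2) :
    ((hammingNorm y : ℝ)) = ∑ i, (if y i = 0 then (0:ℝ) else 1) := by
  rw [hammingNorm]
  rw [Finset.card_filter]
  push_cast
  congr 1 with i
  by_cases h : y i = 0 <;> simp [h]

lemma exp_le_convex (l y : ℝ) (hy : -1 ≤ y) (hy' : y ≤ 1) :
    Real.exp (l * y) ≤ (1 - y)/2 * Real.exp (-l) + (1 + y)/2 * Real.exp l := by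
  have ha : (0:ℝ) ≤ (1 - y)/2 := by linarith
  have hb : (0:ℝ) ≤ (1 + y)/2 := by linarith
  have hab : (1 - y)/2 + (1 + y)/2 = (1:ℝ) := by ring
  have h := convexOn_exp.2 (Set.mem_univ (-l)) (Set.mem_univ l) ha hb hab
  simp only [smul_eq_mul] at h
  have : (1 - y)/2 * (-l) + (1 + y)/2 * l = l * y := by ring
  rwa [this] at h

lemma coord_mgf (p1 l : ℝ) (h0 : 0 ≤ p1) (h1 : p1 ≤ 1) :
    (1 - p1) * Real.exp (l * (0 - p1)) + p1 * Real.exp (l * (1 - p1)) ≤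
      Real.exp (l ^ 2 / 2) := by
  have e1 := exp_le_convex l (-p1) (by linarith) (by linarith)
  have e2 := exp_le_convex l (1 - p1) (by linarith) (by linarith)
  have hc : Real.cosh l ≤ Real.exp (l ^ 2 / 2) := Real.cosh_le_exp_half_sq l
  rw [Real.cosh_eq] at hc
  have hp : 0 ≤ 1 - p1 := by linarith
  have m1 := mul_le_mul_of_nonneg_left e1 hp
  have m2 := mul_le_mul_of_nonneg_left e2 h0
  have : l * (0 - p1) = l * (-p1) := by ring
  rw [this]
  nlinarith [m1, m2, hc]

section Y
variable {m : ℕ} (β : ℝ)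

private noncomputable def ww (β : ℝ) : ZMod 2 → ℝ := fun b => if b = 0 then 1 else Real.exp (-β)

lemma hammingNorm_cast' (y : Fin m → ZMod 2) :
    ((hammingNorm y : ℝ)) = ∑ i, (if y i = 0 then (0:ℝ) else 1) := by
  rw [hammingNorm, Finset.card_filter]
  push_cast
  congr 1 with i
  by_cases h : y i = 0 <;> simp [h]

lemma exp_mul_norm (a : ℝ) (y : Fin m → ZMod 2) :
    Real.exp (a * (hammingNorm y : ℝ)) = ∏ i, (if y i = 0 then 1 else Real.exp a) := by
  rw [hammingNorm_cast', Finset.mul_sum, Real.exp_sum]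
  congr 1 with i
  by_cases h : y i = 0 <;> simp [h]

lemma exp_energy (y : Fin m → ZMod 2) :
    Real.exp (-β * (hammingNorm y : ℝ)) = ∏ i, ww β (y i) := exp_mul_norm (-β) y

lemma sum_prod_pi' (h : Fin m → ZMod 2 → ℝ) :
    ∑ y : Fin m → ZMod 2, ∏ i, h i (y i) = ∏ i, ∑ b : ZMod 2, h i b := by
  rw [Finset.prod_univ_sum, Fintype.piFinset_univ]

lemma sum_zmod2 (h : ZMod 2 → ℝ) : ∑ b : ZMod 2, h b = h 0 + h 1 := by
  rw [show (univ : Finset (ZMod 2)) = {0, 1} from by decide]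
  simp

lemma Zy_eq : ∑ y : Fin m → ZMod 2, Real.exp (-β * (hammingNorm y : ℝ))
    = (1 + Real.exp (-β)) ^ m := by
  simp_rw [exp_energy]
  rw [sum_prod_pi']
  rw [Finset.prod_const]
  congr 1
  · rw [sum_zmod2]; simp [ww]
  · simp

lemma mgf_raw (l : ℝ) : ∑ y : Fin m → ZMod 2,
    Real.exp (-β * (hammingNorm y : ℝ)) * Real.exp (l * (hammingNorm y : ℝ))
    = (1 + Real.exp (-β) * Real.exp l) ^ m := by
  have : ∀ y : Fin m → ZMod 2, Real.exp (-β * (hammingNorm y : ℝ)) *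
      Real.exp (l * (hammingNorm y : ℝ))
      = ∏ i, (ww β (y i) * (if y i = 0 then 1 else Real.exp l)) := by
    intro y
    rw [exp_energy, exp_mul_norm, ← Finset.prod_mul_distrib]
  simp_rw [this]
  have h1 := sum_prod_pi' (fun (_ : Fin m) (b : ZMod 2) => ww β b * (if b = 0 then 1 else Real.exp l))
  beta_reduce at h1
  rw [h1, Finset.prod_const]
  congr 1
  · rw [sum_zmod2]; simp [ww]
  · simp

lemma mu_raw : ∑ y : Fin m → ZMod 2,
    Real.exp (-β * (hammingNorm y : ℝ)) * (hammingNorm y : ℝ)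
    = m * Real.exp (-β) * (1 + Real.exp (-β)) ^ (m - 1) := by
  have key : ∀ y : Fin m → ZMod 2, Real.exp (-β * (hammingNorm y : ℝ)) * (hammingNorm y : ℝ)
      = ∑ j, ∏ i, (ww β (y i) * (if i = j then (if y i = 0 then 0 else 1) else 1)) := by
    intro y
    rw [exp_energy, hammingNorm_cast', Finset.mul_sum]
    congr 1 with j
    rw [Finset.prod_mul_distrib]
    congr 1
    rw [Finset.prod_ite_eq' Finset.univ j (fun i => if y i = 0 then (0:ℝ) else 1)]
    simp
  simp_rw [key]
  rw [Finset.sum_comm]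
  have inner : ∀ j : Fin m, ∑ y : Fin m → ZMod 2,
      ∏ i, (ww β (y i) * (if i = j then (if y i = 0 then 0 else 1) else 1))
      = Real.exp (-β) * (1 + Real.exp (-β)) ^ (m - 1) := by
    intro j
    have h1 := sum_prod_pi' (fun (i : Fin m) (b : ZMod 2) => ww β b * (if i = j then (if b = 0 then (0:ℝ) else 1) else 1))
    beta_reduce at h1
    rw [h1]
    have hterm : ∀ i : Fin m, (∑ b : ZMod 2, ww β b * (if i = j then (if b = 0 then (0:ℝ) else 1) else 1))
        = if i = j then Real.exp (-β) else 1 + Real.exp (-β) := by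
      intro i
      by_cases h : i = j <;> rw [sum_zmod2] <;> simp [h, ww]
    simp_rw [hterm]
    rw [← Finset.mul_prod_erase Finset.univ _ (Finset.mem_univ j), if_pos rfl]
    congr 1
    rw [Finset.prod_congr rfl (fun i hi => if_neg (Finset.mem_erase.1 hi).1),
      Finset.prod_const, Finset.card_erase_of_mem (Finset.mem_univ j)]
    simp
  simp_rw [inner]
  rw [Finset.sum_const, Finset.card_univ, Fintype.card_fin, nsmul_eq_mul]
  ring
end Y

section Conc
variable {m : ℕ}

lemma mgf_bound (hm : 0 < m) (β l Zy μ : ℝ)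
    (hZ : Zy = ∑ y : Fin m → ZMod 2, Real.exp (-β * (hammingNorm y : ℝ)))
    (hμ : μ = ∑ y : Fin m → ZMod 2,
      (Real.exp (-β * (hammingNorm y : ℝ)) / Zy) * (hammingNorm y : ℝ)) :
    ∑ y : Fin m → ZMod 2,
      Real.exp (-β * (hammingNorm y : ℝ)) * Real.exp (l * ((hammingNorm y : ℝ) - μ))
      ≤ Zy * Real.exp (m * l ^ 2 / 2) := by
  set S : ℝ := 1 + Real.exp (-β) with hS
  have hSpos : 0 < S := by positivity
  have hZval : Zy = S ^ m := by rw [hZ, Zy_eq]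
  have hZpos : 0 < Zy := by rw [hZval]; positivity
  set p1 : ℝ := Real.exp (-β) / S with hp1def
  have hp0 : 0 ≤ p1 := by positivity
  have hp1le : p1 ≤ 1 := by
    rw [hp1def, div_le_one hSpos]; nlinarith [Real.exp_pos (-β)]
  -- value of μ
  have hμval : μ = m * p1 := by
    rw [hμ]
    rw [Finset.sum_congr rfl (fun y _ => div_mul_eq_mul_div _ _ _), ← Finset.sum_div,
      mu_raw, hZval]
    obtain ⟨k, rfl⟩ := Nat.exists_eq_succ_of_ne_zero (Nat.pos_iff_ne_zero.mp hm)
    simp only [Nat.succ_sub_one]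
    have hS0 : S ≠ 0 := ne_of_gt hSpos
    have hSk : S ^ k ≠ 0 := pow_ne_zero _ hS0
    rw [pow_succ, hp1def]
    field_simp
    ring
  -- factor the sum
  have hfac : ∑ y : Fin m → ZMod 2,
      Real.exp (-β * (hammingNorm y : ℝ)) * Real.exp (l * ((hammingNorm y : ℝ) - μ))
      = Real.exp (-(l * μ)) * (1 + Real.exp (-β) * Real.exp l) ^ m := by
    have : ∀ y : Fin m → ZMod 2,
        Real.exp (-β * (hammingNorm y : ℝ)) * Real.exp (l * ((hammingNorm y : ℝ) - μ))
        = Real.exp (-(l * μ)) *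
          (Real.exp (-β * (hammingNorm y : ℝ)) * Real.exp (l * (hammingNorm y : ℝ))) := by
      intro y
      rw [← Real.exp_add, ← Real.exp_add, ← Real.exp_add]
      ring_nf
    simp_rw [this]
    rw [← Finset.mul_sum, mgf_raw]
  rw [hfac, hZval, hμval]
  -- per-coordinate bound
  have hcoord : (1 + Real.exp (-β) * Real.exp l) * Real.exp (-(l * p1))
      ≤ S * Real.exp (l ^ 2 / 2) := by
    have h := coord_mgf p1 l hp0 hp1le
    have hm1 := mul_le_mul_of_nonneg_left h (le_of_lt hSpos)
    have e1 : Real.exp (l * (0 - p1)) = Real.exp (-(l * p1)) := by ring_nf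
    have e2 : Real.exp (l * (1 - p1)) = Real.exp l * Real.exp (-(l * p1)) := by
      rw [← Real.exp_add]; ring_nf
    rw [e1, e2] at hm1
    have hSp : S * p1 = Real.exp (-β) := by
      rw [hp1def]; field_simp
    have expand : S * ((1 - p1) * Real.exp (-(l * p1)) + p1 * (Real.exp l * Real.exp (-(l * p1))))
        = (1 + Real.exp (-β) * Real.exp l) * Real.exp (-(l * p1)) := by
      rw [hS] at hSp ⊢
      linear_combination (Real.exp l * Real.exp (-(l * p1)) - Real.exp (-(l * p1))) * hSp
    calc (1 + Real.exp (-β) * Real.exp l) * Real.exp (-(l * p1))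
        = S * ((1 - p1) * Real.exp (-(l * p1)) + p1 * (Real.exp l * Real.exp (-(l * p1)))) := expand.symm
      _ ≤ S * Real.exp (l ^ 2 / 2) := hm1
  -- raise to the m-th power
  calc Real.exp (-(l * (m * p1))) * (1 + Real.exp (-β) * Real.exp l) ^ m
      = ((1 + Real.exp (-β) * Real.exp l) * Real.exp (-(l * p1))) ^ m := by
        rw [mul_pow, ← Real.exp_nat_mul]
        ring_nf
    _ ≤ (S * Real.exp (l ^ 2 / 2)) ^ m := by
        apply pow_le_pow_left₀ _ hcoord
        positivity
    _ = S ^ m * Real.exp (m * l ^ 2 / 2) := by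
        rw [mul_pow, ← Real.exp_nat_mul]
        ring_nf
end Conc

section Tails
variable {m : ℕ}

lemma tail_bound (hm : 0 < m) (β Zy μ : ℝ)
    (hZ : Zy = ∑ y : Fin m → ZMod 2, Real.exp (-β * (hammingNorm y : ℝ)))
    (hμ : μ = ∑ y : Fin m → ZMod 2,
      (Real.exp (-β * (hammingNorm y : ℝ)) / Zy) * (hammingNorm y : ℝ))
    (l c : ℝ) (P : (Fin m → ZMod 2) → Prop) [DecidablePred P]
    (hP : ∀ y, P y → c ≤ l * ((hammingNorm y : ℝ) - μ)) :
    ∑ y ∈ Finset.univ.filter P, Real.exp (-β * (hammingNorm y : ℝ)) / Zy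
      ≤ Real.exp (-c + m * l ^ 2 / 2) := by
  have hZpos : 0 < Zy := by rw [hZ, Zy_eq]; positivity
  have step1 : ∑ y ∈ Finset.univ.filter P, Real.exp (-β * (hammingNorm y : ℝ)) / Zy
      ≤ ∑ y ∈ Finset.univ.filter P,
        (Real.exp (-β * (hammingNorm y : ℝ)) * Real.exp (l * ((hammingNorm y : ℝ) - μ))
          * Real.exp (-c)) / Zy := by
    apply Finset.sum_le_sum
    intro y hy
    have h1 := hP y (Finset.mem_filter.1 hy).2
    have h2 : (1:ℝ) ≤ Real.exp (l * ((hammingNorm y : ℝ) - μ)) * Real.exp (-c) := by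
      rw [← Real.exp_add]
      have h3 : (0:ℝ) ≤ l * ((hammingNorm y : ℝ) - μ) + -c := by linarith
      calc (1:ℝ) = Real.exp 0 := Real.exp_zero.symm
        _ ≤ _ := Real.exp_le_exp.2 h3
    have h4 : Real.exp (-β * (hammingNorm y : ℝ))
        ≤ Real.exp (-β * (hammingNorm y : ℝ)) * Real.exp (l * ((hammingNorm y : ℝ) - μ))
          * Real.exp (-c) := by
      nlinarith [Real.exp_pos (-β * (hammingNorm y : ℝ))]
    gcongr
  have step2 : ∑ y ∈ Finset.univ.filter P,
        (Real.exp (-β * (hammingNorm y : ℝ)) * Real.exp (l * ((hammingNorm y : ℝ) - μ))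
          * Real.exp (-c)) / Zy
      ≤ ∑ y : Fin m → ZMod 2,
        (Real.exp (-β * (hammingNorm y : ℝ)) * Real.exp (l * ((hammingNorm y : ℝ) - μ))
          * Real.exp (-c)) / Zy := by
    apply Finset.sum_le_sum_of_subset_of_nonneg (Finset.filter_subset _ _)
    intro y _ _
    positivity
  have step3 : ∑ y : Fin m → ZMod 2,
        (Real.exp (-β * (hammingNorm y : ℝ)) * Real.exp (l * ((hammingNorm y : ℝ) - μ))
          * Real.exp (-c)) / Zy
      = (Real.exp (-c) / Zy) * ∑ y : Fin m → ZMod 2,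
          Real.exp (-β * (hammingNorm y : ℝ)) * Real.exp (l * ((hammingNorm y : ℝ) - μ)) := by
    rw [Finset.mul_sum]
    congr 1 with y
    ring
  have step4 := mgf_bound hm β l Zy μ hZ hμ
  calc ∑ y ∈ Finset.univ.filter P, Real.exp (-β * (hammingNorm y : ℝ)) / Zy
      ≤ _ := step1
    _ ≤ _ := step2
    _ = _ := step3
    _ ≤ (Real.exp (-c) / Zy) * (Zy * Real.exp (m * l ^ 2 / 2)) := by
        apply mul_le_mul_of_nonneg_left step4
        positivity
    _ = Real.exp (-c + m * l ^ 2 / 2) := by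
        rw [Real.exp_add]
        field_simp
end Tails

lemma y_conc {m : ℕ} (hm : 0 < m) (β t Zy μ : ℝ) (ht : 0 < t)
    (hZ : Zy = ∑ y : Fin m → ZMod 2, Real.exp (-β * (hammingNorm y : ℝ)))
    (hμ : μ = ∑ y : Fin m → ZMod 2,
      (Real.exp (-β * (hammingNorm y : ℝ)) / Zy) * (hammingNorm y : ℝ)) :
    ∑ y ∈ Finset.univ.filter (fun y : Fin m → ZMod 2 => ¬ |(hammingNorm y : ℝ) - μ| ≤ t),
      Real.exp (-β * (hammingNorm y : ℝ)) / Zy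
      ≤ 2 * Real.exp (-t ^ 2 / (2 * m)) := by
  classical
  have hmR : (0:ℝ) < m := by exact_mod_cast hm
  have hZpos : 0 < Zy := by rw [hZ, Zy_eq]; positivity
  set A := Finset.univ.filter (fun y : Fin m → ZMod 2 => t < (hammingNorm y : ℝ) - μ) with hA
  set B := Finset.univ.filter (fun y : Fin m → ZMod 2 => (hammingNorm y : ℝ) - μ < -t) with hB
  have hsub : Finset.univ.filter (fun y : Fin m → ZMod 2 => ¬ |(hammingNorm y : ℝ) - μ| ≤ t)
      ⊆ A ∪ B := by
    intro y hy
    have h1 : ¬ |(hammingNorm y : ℝ) - μ| ≤ t := (Finset.mem_filter.1 hy).2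
    rw [Finset.mem_union, hA, hB, Finset.mem_filter, Finset.mem_filter]
    rcases lt_or_ge t ((hammingNorm y : ℝ) - μ) with h | h
    · exact Or.inl ⟨Finset.mem_univ _, h⟩
    · refine Or.inr ⟨Finset.mem_univ _, ?_⟩
      by_contra h3
      push_neg at h3
      exact h1 (abs_le.2 ⟨h3, h⟩)
  have hdisj : Disjoint A B := by
    rw [Finset.disjoint_filter]
    intro y _ h1 h2
    linarith
  have hnonneg : ∀ y ∈ A ∪ B, 0 ≤ Real.exp (-β * (hammingNorm y : ℝ)) / Zy := by
    intro y _; positivity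
  have hstep : ∑ y ∈ Finset.univ.filter
        (fun y : Fin m → ZMod 2 => ¬ |(hammingNorm y : ℝ) - μ| ≤ t),
        Real.exp (-β * (hammingNorm y : ℝ)) / Zy
      ≤ ∑ y ∈ A, Real.exp (-β * (hammingNorm y : ℝ)) / Zy
        + ∑ y ∈ B, Real.exp (-β * (hammingNorm y : ℝ)) / Zy := by
    rw [← Finset.sum_union hdisj]
    exact Finset.sum_le_sum_of_subset_of_nonneg hsub (fun y hy _ => hnonneg y hy)
  have htailA : ∑ y ∈ A, Real.exp (-β * (hammingNorm y : ℝ)) / Zy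
      ≤ Real.exp (-t ^ 2 / (2 * m)) := by
    have := tail_bound hm β Zy μ hZ hμ (t / m) (t ^ 2 / m)
      (fun y => t < (hammingNorm y : ℝ) - μ)
      (fun y hy => by
        have hlm : 0 < t / (m:ℝ) := by positivity
        have : t ≤ (hammingNorm y : ℝ) - μ := le_of_lt hy
        calc t ^ 2 / m = (t / m) * t := by field_simp
          _ ≤ (t / m) * ((hammingNorm y : ℝ) - μ) := by
              exact mul_le_mul_of_nonneg_left this (le_of_lt hlm))
    refine this.trans_eq ?_
    congr 1
    field_simp
    ring
  have htailB : ∑ y ∈ B, Real.exp (-β * (hammingNorm y : ℝ)) / Zy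
      ≤ Real.exp (-t ^ 2 / (2 * m)) := by
    have := tail_bound hm β Zy μ hZ hμ (-(t / m)) (t ^ 2 / m)
      (fun y => (hammingNorm y : ℝ) - μ < -t)
      (fun y hy => by
        have hlm : 0 < t / (m:ℝ) := by positivity
        have h5 : t ≤ -((hammingNorm y : ℝ) - μ) := by linarith
        calc t ^ 2 / m = (t / m) * t := by field_simp
          _ ≤ (t / m) * (-((hammingNorm y : ℝ) - μ)) :=
              mul_le_mul_of_nonneg_left h5 (le_of_lt hlm)
          _ = (-(t / m)) * ((hammingNorm y : ℝ) - μ) := by ring)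
    refine this.trans_eq ?_
    congr 1
    field_simp
    ring
  calc _ ≤ _ := hstep
    _ ≤ Real.exp (-t ^ 2 / (2 * m)) + Real.exp (-t ^ 2 / (2 * m)) := add_le_add htailA htailB
    _ = 2 * Real.exp (-t ^ 2 / (2 * m)) := by ring

lemma sum_fiber {m n : ℕ} (φ : (Fin n → ZMod 2) →ₗ[ZMod 2] (Fin m → ZMod 2))
    (hs : Function.Surjective φ) (F : (Fin m → ZMod 2) → ℝ) :
    ∑ x : Fin n → ZMod 2, F (φ x)
      = (Fintype.card {x : Fin n → ZMod 2 // φ x = 0} : ℝ) * ∑ y : Fin m → ZMod 2, F y := by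
  classical
  rw [Finset.sum_comp F φ, Finset.image_univ_of_surjective hs]
  rw [Finset.mul_sum]
  apply Finset.sum_congr rfl
  intro y _
  have hcard : (Finset.univ.filter (fun x : Fin n → ZMod 2 => φ x = y)).card
      = Fintype.card {x : Fin n → ZMod 2 // φ x = 0} := by
    rw [← Fintype.card_subtype]
    obtain ⟨x0, hx0⟩ := hs y
    apply Fintype.card_congr
    refine ⟨fun z => ⟨z.1 - x0, by rw [map_sub, z.2, hx0, sub_self]⟩,
      fun z => ⟨z.1 + x0, by rw [map_add, z.2, hx0, zero_add]⟩, ?_, ?_⟩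
    · intro z; ext1; simp
    · intro z; ext1; simp
  rw [hcard, nsmul_eq_mul]

lemma cancel_aux (c A Zq B : ℝ) (hc : c ≠ 0) : c * (A / (c * Zq) * B) = A / Zq * B := by
  rcases eq_or_ne Zq 0 with h | h
  · simp [h]
  · field_simp

lemma cancel_aux2 (c A Zq : ℝ) (hc : c ≠ 0) : c * (A / (c * Zq)) = A / Zq := by
  rcases eq_or_ne Zq 0 with h | h
  · simp [h]
  · field_simp

/-- for `H ∈ F₂^{m×n}` of rank `m` and `β, ω > 0`, the Gibbs
weight of the microcanonical shell `Ξ_ω(β) = {x : ||Hx| − ⟨E⟩_β| ≤ ωn}`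
satisfies `p_G(Ξ_ω(β)) ≥ 1 − 2·exp(−ω²n²/(2m))`. -/
theorem gibbs_concentration {m n : ℕ} (H : Matrix (Fin m) (Fin n) (ZMod 2))
    (hrank : H.rank = m) (β ω : ℝ) (hβ : 0 < β) (hω : 0 < ω) :
    let Z : ℝ := ∑ x : Fin n → ZMod 2, Real.exp (-β * (hammingNorm (H.mulVec x) : ℝ))
    let pG : (Fin n → ZMod 2) → ℝ := fun x =>
      Real.exp (-β * (hammingNorm (H.mulVec x) : ℝ)) / Z
    let Eavg : ℝ := ∑ x : Fin n → ZMod 2, pG x * (hammingNorm (H.mulVec x) : ℝ)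
    1 - 2 * Real.exp (-(ω ^ 2 * (n : ℝ) ^ 2) / (2 * m)) ≤
      ∑ x ∈ Finset.univ.filter
          (fun x : Fin n → ZMod 2 => |(hammingNorm (H.mulVec x) : ℝ) - Eavg| ≤ ω * n),
        pG x := by
  intro Z pG Eavg
  classical
  have hZdef : Z = ∑ x : Fin n → ZMod 2, Real.exp (-β * (hammingNorm (H.mulVec x) : ℝ)) := rfl
  have hZpos : 0 < Z := by
    rw [hZdef]; exact Finset.sum_pos (fun x _ => Real.exp_pos _) ⟨0, Finset.mem_univ 0⟩
  have hpGnn : ∀ x, 0 ≤ pG x := fun x => by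
    have : pG x = Real.exp (-β * (hammingNorm (H.mulVec x) : ℝ)) / Z := rfl
    rw [this]; positivity
  rcases Nat.eq_zero_or_pos m with hm0 | hm
  · -- trivial case m = 0
    have h1 : -(ω ^ 2 * (n : ℝ) ^ 2) / (2 * (m:ℝ)) = 0 := by
      rw [hm0]; norm_num
    rw [h1, Real.exp_zero]
    have h2 : (0:ℝ) ≤ ∑ x ∈ Finset.univ.filter
        (fun x : Fin n → ZMod 2 => |(hammingNorm (H.mulVec x) : ℝ) - Eavg| ≤ ω * n), pG x :=
      Finset.sum_nonneg (fun x _ => hpGnn x)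
    linarith
  -- main case
  have hsurj : Function.Surjective H.mulVecLin := by
    rw [← LinearMap.range_eq_top]
    apply Submodule.eq_top_of_finrank_eq
    have h1 : Module.finrank (ZMod 2) (LinearMap.range H.mulVecLin) = m := hrank
    rw [h1, Module.finrank_fin_fun]
  have hmn : m ≤ n := hrank ▸ Matrix.rank_le_width H
  have hn : 0 < n := lt_of_lt_of_le hm hmn
  have hφ : ∀ x, H.mulVec x = H.mulVecLin x := fun x => rfl
  set c : ℝ := (Fintype.card {x : Fin n → ZMod 2 // H.mulVecLin x = 0} : ℝ) with hcdef
  have hcpos : 0 < c := by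
    rw [hcdef]
    have : Nonempty {x : Fin n → ZMod 2 // H.mulVecLin x = 0} := ⟨⟨0, map_zero _⟩⟩
    exact_mod_cast Fintype.card_pos
  set Zy : ℝ := ∑ y : Fin m → ZMod 2, Real.exp (-β * (hammingNorm y : ℝ)) with hZydef
  have hZypos : 0 < Zy := by
    rw [hZydef]; exact Finset.sum_pos (fun y _ => Real.exp_pos _) ⟨0, Finset.mem_univ 0⟩
  have hZc : Z = c * Zy := by
    rw [hZdef, hZydef]
    simp_rw [hφ]
    exact sum_fiber H.mulVecLin hsurj (fun y => Real.exp (-β * (hammingNorm y : ℝ)))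
  set μ : ℝ := ∑ y : Fin m → ZMod 2,
      (Real.exp (-β * (hammingNorm y : ℝ)) / Zy) * (hammingNorm y : ℝ) with hμdef
  have hEavg : Eavg = μ := by
    have h1 : Eavg = ∑ x : Fin n → ZMod 2,
        (Real.exp (-β * (hammingNorm (H.mulVec x) : ℝ)) / Z) * (hammingNorm (H.mulVec x) : ℝ) := rfl
    rw [h1, hμdef]
    simp_rw [hφ]
    rw [sum_fiber H.mulVecLin hsurj
      (fun y => (Real.exp (-β * (hammingNorm y : ℝ)) / Z) * (hammingNorm y : ℝ)), Finset.mul_sum]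
    apply Finset.sum_congr rfl
    intro y _
    rw [hZc]
    exact cancel_aux c _ Zy _ (ne_of_gt hcpos)
  -- the filtered sum over x equals the filtered sum over y
  have hshell : ∑ x ∈ Finset.univ.filter
        (fun x : Fin n → ZMod 2 => |(hammingNorm (H.mulVec x) : ℝ) - Eavg| ≤ ω * n), pG x
      = ∑ y ∈ Finset.univ.filter
          (fun y : Fin m → ZMod 2 => |(hammingNorm y : ℝ) - μ| ≤ ω * n),
          Real.exp (-β * (hammingNorm y : ℝ)) / Zy := by
    rw [Finset.sum_filter, Finset.sum_filter]
    have h1 : ∀ x : Fin n → ZMod 2,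
        (if |(hammingNorm (H.mulVec x) : ℝ) - Eavg| ≤ ω * n then pG x else 0)
        = (fun y : Fin m → ZMod 2 =>
            if |(hammingNorm y : ℝ) - μ| ≤ ω * n
            then Real.exp (-β * (hammingNorm y : ℝ)) / Z else 0) (H.mulVecLin x) := by
      intro x
      simp only [← hφ, hEavg]
      rfl
    simp_rw [h1]
    have h2 := sum_fiber H.mulVecLin hsurj
      (fun y : Fin m → ZMod 2 =>
        if |(hammingNorm y : ℝ) - μ| ≤ ω * n
        then Real.exp (-β * (hammingNorm y : ℝ)) / Z else 0)
    beta_reduce at h2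
    rw [h2, Finset.mul_sum]
    apply Finset.sum_congr rfl
    intro y _
    by_cases hy : |(hammingNorm y : ℝ) - μ| ≤ ω * n
    · rw [if_pos hy, if_pos hy, hZc]
      exact cancel_aux2 c _ Zy (ne_of_gt hcpos)
    · rw [if_neg hy, if_neg hy, mul_zero]
  rw [hshell]
  -- total mass 1
  have htotal : ∑ y : Fin m → ZMod 2, Real.exp (-β * (hammingNorm y : ℝ)) / Zy = 1 := by
    rw [← Finset.sum_div, ← hZydef, div_self (ne_of_gt hZypos)]
  have hsplit := Finset.sum_filter_add_sum_filter_not Finset.univ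
    (fun y : Fin m → ZMod 2 => |(hammingNorm y : ℝ) - μ| ≤ ω * n)
    (fun y => Real.exp (-β * (hammingNorm y : ℝ)) / Zy)
  rw [htotal] at hsplit
  have hωn : 0 < ω * n := by positivity
  have hconc := y_conc hm β (ω * n) Zy μ hωn hZydef hμdef
  have hexp : -(ω * (n:ℝ)) ^ 2 / (2 * m) = -(ω ^ 2 * (n : ℝ) ^ 2) / (2 * m) := by
    ring_nf
  rw [hexp] at hconc
  linarith
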